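/- Let X be a second countable T0 space. Then every irreducible closed subset of X is a well-filtered determined (WD) set (equivalently, the well-filterification of X coincides with the sobrification of X). -/
import Mathlib


/-- The specialization order of a topological space: `x ≤ y` iff `x ∈ cl {y}`. -/
def SpecLE {X : Type*} [TopologicalSpace X] (x y : X) : Prop := x ∈ closure ({y} : Set X)

/-- A subset is directed (w.r.t. the specialization order) if it is nonempty and
every pair of its elements has an upper bound in it. -/
def DirectedSubset {X : Type*} [TopologicalSpace X] (D : Set X) : Prop :=
  D.Nonempty ∧ ∀ x ∈ D, ∀ y ∈ D, ∃ z ∈ D, SpecLE x z ∧ SpecLE y z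

/-- `↓A` with respect to the specialization order. -/
def SpecLower {X : Type*} [TopologicalSpace X] (A : Set X) : Set X :=
  {x | ∃ a ∈ A, SpecLE x a}

/-- Saturated = upper set in the specialization order. -/
def SatUpper {X : Type*} [TopologicalSpace X] (K : Set X) : Prop :=
  ∀ x ∈ K, ∀ y, SpecLE x y → y ∈ K

/-- A family of sets is filtered. -/
def FilteredFam {X : Type*} (𝒦 : Set (Set X)) : Prop :=
  ∀ K₁ ∈ 𝒦, ∀ K₂ ∈ 𝒦, ∃ K₃ ∈ 𝒦, K₃ ⊆ K₁ ∩ K₂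

/-- `A` is a KF-set: there is a nonempty filtered family `𝒦` of compact saturated sets such
that `cl A` is a minimal closed set intersecting all members of `𝒦`. -/
def IsKFSet {X : Type*} [TopologicalSpace X] (A : Set X) : Prop :=
  A.Nonempty ∧ ∃ 𝒦 : Set (Set X), 𝒦.Nonempty ∧ (∀ K ∈ 𝒦, IsCompact K ∧ SatUpper K) ∧
    FilteredFam 𝒦 ∧ (∀ K ∈ 𝒦, (closure A ∩ K).Nonempty) ∧
    (∀ C : Set X, IsClosed C → C ⊆ closure A → (∀ K ∈ 𝒦, (C ∩ K).Nonempty) → C = closure A)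


/-- An irreducible closed set. -/
def IrredClosed {X : Type*} [TopologicalSpace X] (A : Set X) : Prop :=
  IsClosed A ∧ A.Nonempty ∧
    ∀ B C : Set X, IsClosed B → IsClosed C → A ⊆ B ∪ C → A ⊆ B ∨ A ⊆ C

/-- A well-filtered space: for every nonempty filtered family of compact saturated sets and
every open set containing its intersection, some member of the family is contained in the
open set. -/
def WellFiltered (Y : Type*) [TopologicalSpace Y] : Prop :=
  ∀ 𝒦 : Set (Set Y), 𝒦.Nonempty → (∀ K ∈ 𝒦, IsCompact K ∧ SatUpper K) → FilteredFam 𝒦 →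
    ∀ U : Set Y, IsOpen U → ⋂₀ 𝒦 ⊆ U → ∃ K ∈ 𝒦, K ⊆ U

/-- A well-filtered determined (WD) subset of `X`: every continuous map to a well-filtered
`T₀` space sends it to the closure of a unique point. -/
def IsWDSet {X : Type*} [TopologicalSpace X] (A : Set X) : Prop :=
  ∀ (Y : Type*) [TopologicalSpace Y] [T0Space Y], WellFiltered Y →
    ∀ f : X → Y, Continuous f → ∃ y : Y, closure (f '' A) = closure ({y} : Set Y)

lemma specLE_refl' {X : Type*} [TopologicalSpace X] (x : X) : SpecLE x x :=
  subset_closure rfl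

lemma specLE_mem_open' {X : Type*} [TopologicalSpace X] {x y : X} {U : Set X}
    (hU : IsOpen U) (hx : x ∈ U) (h : SpecLE x y) : y ∈ U := by
  obtain ⟨z, hz, rfl⟩ := (mem_closure_iff.mp h) U hU hx
  exact hz

lemma specLE_trans' {X : Type*} [TopologicalSpace X] {x y z : X}
    (h1 : SpecLE x y) (h2 : SpecLE y z) : SpecLE x z := by
  rw [SpecLE, mem_closure_iff]
  intro U hU hx
  exact ⟨z, specLE_mem_open' hU (specLE_mem_open' hU hx h1) h2, rfl⟩


open Set TopologicalSpace in
lemma exists_dense_tail_seq {X : Type*} [TopologicalSpace X] [SecondCountableTopology X]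
    {A : Set X} (hA : IrredClosed A) :
    ∃ x : ℕ → X, (∀ n, x n ∈ A) ∧
      ∀ U : Set X, IsOpen U → (U ∩ A).Nonempty → ∃ k, ∀ m, k ≤ m → x m ∈ U := by
  obtain ⟨hAc, hAne, hirr⟩ := hA
  -- pairwise irreducibility for open sets
  have hpair : ∀ U V : Set X, IsOpen U → IsOpen V → (U ∩ A).Nonempty → (V ∩ A).Nonempty →
      ((U ∩ V) ∩ A).Nonempty := by
    intro U V hU hV ⟨a, haU, haA⟩ ⟨b, hbV, hbA⟩
    by_contra h
    rw [Set.not_nonempty_iff_eq_empty] at h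
    have hsub : A ⊆ Uᶜ ∪ Vᶜ := by
      intro z hz
      by_cases hzU : z ∈ U
      · by_cases hzV : z ∈ V
        · exact absurd (Set.eq_empty_iff_forall_notMem.mp h z ⟨⟨hzU, hzV⟩, hz⟩) (by simp)
        · exact Or.inr hzV
      · exact Or.inl hzU
    rcases hirr Uᶜ Vᶜ hU.isClosed_compl hV.isClosed_compl hsub with hc | hc
    · exact (hc haA) haU
    · exact (hc hbA) hbV
  obtain ⟨b, hbc, -, hb⟩ := exists_countable_basis X
  set S : Set (Set X) := {U ∈ b | (U ∩ A).Nonempty} with hS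
  have hSc : S.Countable := hbc.mono (Set.sep_subset _ _)
  have hSne : S.Nonempty := by
    obtain ⟨a, ha⟩ := hAne
    obtain ⟨v, hvb, hav, -⟩ := hb.exists_subset_of_mem_open (Set.mem_univ a) isOpen_univ
    exact ⟨v, hvb, ⟨a, hav, ha⟩⟩
  obtain ⟨u, hu⟩ := Set.Countable.exists_eq_range hSc hSne
  have humem : ∀ n, u n ∈ S := fun n => hu ▸ Set.mem_range_self n
  have huo : ∀ n, IsOpen (u n) := fun n => hb.isOpen (humem n).1
  have hune : ∀ n, (u n ∩ A).Nonempty := fun n => (humem n).2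
  -- finite intersections meet A
  have hV : ∀ n : ℕ, ((⋂ i ∈ Finset.range n, u i) ∩ A).Nonempty := by
    intro n
    induction n with
    | zero => simpa using hAne
    | succ n ih =>
      have : (⋂ i ∈ Finset.range (n+1), u i) = (⋂ i ∈ Finset.range n, u i) ∩ u n := by
        rw [Finset.range_add_one]
        simp [Set.biInter_insert, Set.inter_comm]
      rw [this]
      exact hpair _ _ (isOpen_biInter_finset fun i _ => huo i) (huo n) ih (hune n)
  choose x hx1 hx2 using fun n => hV (n + 1)
  refine ⟨x, hx2, ?_⟩
  intro U hU ⟨a, haU, haA⟩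
  obtain ⟨v, hvb, hav, hvU⟩ := hb.exists_subset_of_mem_open haU hU
  have hvS : v ∈ S := ⟨hvb, ⟨a, hav, haA⟩⟩
  rw [hu] at hvS
  obtain ⟨k, hk⟩ := hvS
  refine ⟨k, fun m hm => ?_⟩
  have : x m ∈ u k := by
    have := hx1 m
    simp only [Set.mem_iInter] at this
    exact this k (Finset.mem_range.mpr (Nat.lt_succ_of_le hm))
  exact hvU (hk ▸ this)

/-- in a second countable `T₀` space, every irreducible closed set is a
well-filtered determined set. -/
theorem second_countable_irred_WD {X : Type*} [TopologicalSpace X] [T0Space X]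
    [SecondCountableTopology X] :
    ∀ A : Set X, IrredClosed A → IsWDSet A := by
  intro A hA Y _ _ hY f hf
  obtain ⟨x, hxA, P1⟩ := exists_dense_tail_seq hA
  set Q : ℕ → Set Y := fun n => {y | ∃ m, n ≤ m ∧ SpecLE (f (x m)) y} with hQ
  have hQself : ∀ n, f (x n) ∈ Q n := fun n => ⟨n, le_refl n, specLE_refl' _⟩
  -- compactness
  have hQcomp : ∀ n, IsCompact (Q n) := by
    intro n
    rw [isCompact_iff_finite_subcover]
    intro ι U hUo hcov
    obtain ⟨i0, hi0⟩ := Set.mem_iUnion.mp (hcov (hQself n))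
    have hpre : (f ⁻¹' (U i0) ∩ A).Nonempty := ⟨x n, hi0, hxA n⟩
    obtain ⟨k, hk⟩ := P1 _ ((hUo i0).preimage hf) hpre
    have hg : ∀ m : ℕ, ∃ i, n ≤ m → f (x m) ∈ U i := by
      intro m
      by_cases hm : n ≤ m
      · obtain ⟨i, hi⟩ := Set.mem_iUnion.mp (hcov (⟨m, hm, specLE_refl' _⟩ : f (x m) ∈ Q n))
        exact ⟨i, fun _ => hi⟩
      · exact ⟨i0, fun h => absurd h hm⟩
    choose g hgspec using hg
    classical
    refine ⟨insert i0 ((Finset.range k).image g), ?_⟩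
    rintro y ⟨m, hnm, hle⟩
    rcases le_or_gt k m with hkm | hmk
    · exact Set.mem_biUnion (Finset.mem_insert_self _ _)
        (specLE_mem_open' (hUo i0) (hk m hkm) hle)
    · exact Set.mem_biUnion
        (Finset.mem_insert_of_mem (Finset.mem_image.mpr ⟨m, Finset.mem_range.mpr hmk, rfl⟩))
        (specLE_mem_open' (hUo (g m)) (hgspec m hnm) hle)
  have hQsat : ∀ n, SatUpper (Q n) := by
    rintro n z ⟨m, hm, hz⟩ y hy
    exact ⟨m, hm, specLE_trans' hz hy⟩
  have hQfil : FilteredFam (Set.range Q) := by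
    rintro _ ⟨n₁, rfl⟩ _ ⟨n₂, rfl⟩
    refine ⟨Q (max n₁ n₂), Set.mem_range_self _, ?_⟩
    rintro y ⟨m, hm, hy⟩
    exact ⟨⟨m, le_trans (le_max_left _ _) hm, hy⟩, ⟨m, le_trans (le_max_right _ _) hm, hy⟩⟩
  -- find y in the intersection and in the closure of f '' A
  have key : (⋂₀ (Set.range Q) ∩ closure (f '' A)).Nonempty := by
    by_contra h
    rw [Set.not_nonempty_iff_eq_empty] at h
    have hsub : ⋂₀ (Set.range Q) ⊆ (closure (f '' A))ᶜ := by
      intro z hz hzc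
      exact Set.eq_empty_iff_forall_notMem.mp h z ⟨hz, hzc⟩
    obtain ⟨K, ⟨n, rfl⟩, hKU⟩ := hY (Set.range Q) ⟨Q 0, Set.mem_range_self 0⟩
      (by rintro _ ⟨n, rfl⟩; exact ⟨hQcomp n, hQsat n⟩) hQfil _
      isClosed_closure.isOpen_compl hsub
    exact hKU (hQself n) (subset_closure ⟨x n, hxA n, rfl⟩)
  obtain ⟨y, hy1, hy2⟩ := key
  refine ⟨y, subset_antisymm ?_ ?_⟩
  · refine closure_minimal ?_ isClosed_closure
    rintro _ ⟨a, ha, rfl⟩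
    set C : Set X := f ⁻¹' (closure {y}) with hC
    have hCc : IsClosed C := isClosed_closure.preimage hf
    have haC : a ∈ closure (C ∩ A) := by
      rw [mem_closure_iff]
      intro U hU haU
      obtain ⟨k, hk⟩ := P1 U hU ⟨a, haU, ha⟩
      have hyQ : y ∈ Q k := hy1 (Q k) (Set.mem_range_self k)
      obtain ⟨m, hm, hym⟩ := hyQ
      exact ⟨x m, hk m hm, hym, hxA m⟩
    exact closure_minimal (Set.inter_subset_left) hCc haC
  · exact closure_minimal (Set.singleton_subset_iff.mpr hy2) isClosed_closure
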